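/- arXiv:2105.02537 — 3 statements merged into one kernel-verified Lean document; each statement's English description precedes it below -/
import Mathlib

section
/- Let S be a weak brace whose additive inverse semigroup (S,+) is commutative, and r the solution r(a,b) = (a∘(a⁻+b), (a⁻+b)⁻∘b). Then r³ = r. -/
/-- A weak (left) brace: `(S,+)` and `(S,∘)` are inverse semigroups (with designated
inverse maps `neg` and `inv`), satisfying `a∘(b+c) = a∘b - a + a∘c` and `a∘a⁻ = -a + a`. -/
structure WeakBrace (S : Type*) where
  add : S → S → S
  mul : S → S → S
  neg : S → S
  inv : S → S
  add_assoc : ∀ a b c : S, add (add a b) c = add a (add b c)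
  mul_assoc : ∀ a b c : S, mul (mul a b) c = mul a (mul b c)
  add_neg_add : ∀ a : S, add (add a (neg a)) a = a
  neg_add_neg : ∀ a : S, add (add (neg a) a) (neg a) = neg a
  neg_unique : ∀ a x : S, add (add a x) a = a → add (add x a) x = x → x = neg a
  mul_inv_mul : ∀ a : S, mul (mul a (inv a)) a = a
  inv_mul_inv : ∀ a : S, mul (mul (inv a) a) (inv a) = inv a
  inv_unique : ∀ a x : S, mul (mul a x) a = a → mul (mul x a) x = x → x = inv a
  distrib : ∀ a b c : S, mul a (add b c) = add (add (mul a b) (neg a)) (mul a c)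
  mul_inv_eq : ∀ a : S, mul a (inv a) = add (neg a) a

namespace WBAux

variable {S : Type*} (W : WeakBrace S)

theorem inv_inv (a : S) : W.inv (W.inv a) = a :=
  (W.inv_unique (W.inv a) a (W.inv_mul_inv a) (W.mul_inv_mul a)).symm

theorem neg_neg (a : S) : W.neg (W.neg a) = a :=
  (W.neg_unique (W.neg a) a (W.neg_add_neg a) (W.add_neg_add a)).symm

theorem idem_self_inv (k : S) (h : W.mul k k = k) : W.inv k = k := by
  refine (W.inv_unique k k ?_ ?_).symm <;> rw [h, h]

theorem idem_self_neg (k : S) (h : W.add k k = k) : W.neg k = k := by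
  refine (W.neg_unique k k ?_ ?_).symm <;> rw [h, h]

theorem mulinv_idem (a : S) :
    W.mul (W.mul a (W.inv a)) (W.mul a (W.inv a)) = W.mul a (W.inv a) := by
  rw [← W.mul_assoc, W.mul_inv_mul]

theorem invmul_idem (a : S) :
    W.mul (W.mul (W.inv a) a) (W.mul (W.inv a) a) = W.mul (W.inv a) a := by
  have := mulinv_idem W (W.inv a)
  rwa [inv_inv] at this

theorem idem_mul_idem (g h : S) (hg : W.mul g g = g) (hh : W.mul h h = h) :
    W.mul (W.mul g h) (W.mul g h) = W.mul g h := by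
  set p := W.mul g h with hp
  have hpxp : W.mul (W.mul p (W.inv p)) p = p := W.mul_inv_mul p
  have hxpx : W.mul (W.mul (W.inv p) p) (W.inv p) = W.inv p := W.inv_mul_inv p
  -- h ∘ p⁻ ∘ g is an inverse of p, hence equals p⁻
  have hy : W.mul (W.mul h (W.inv p)) g = W.inv p := by
    refine W.inv_unique p _ ?_ ?_
    · have e : W.mul (W.mul p (W.mul (W.mul h (W.inv p)) g)) p
          = W.mul (W.mul p (W.inv p)) p := by
        simp only [hp, W.mul_assoc]
        rw [← W.mul_assoc h h, hh, ← W.mul_assoc g g, hg]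
      rw [e, hpxp]
    · have e : W.mul (W.mul (W.mul (W.mul h (W.inv p)) g) p) (W.mul (W.mul h (W.inv p)) g)
          = W.mul (W.mul h (W.mul (W.mul (W.inv p) p) (W.inv p))) g := by
        simp only [hp, W.mul_assoc]
        rw [← W.mul_assoc g g, hg, ← W.mul_assoc h h, hh]
      rw [e, hxpx]
  -- p⁻ is idempotent
  have hxx : W.mul (W.inv p) (W.inv p) = W.inv p := by
    conv_lhs => rw [← hy]
    have e : W.mul (W.mul (W.mul h (W.inv p)) g) (W.mul (W.mul h (W.inv p)) g)
        = W.mul (W.mul h (W.mul (W.mul (W.inv p) p) (W.inv p))) g := by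
      simp only [hp, W.mul_assoc]
    rw [e, hxpx, hy]
  -- p = inv (inv p) = inv p
  have h1 : p = W.inv (W.inv p) := W.inv_unique (W.inv p) p (W.inv_mul_inv p) (W.mul_inv_mul p)
  have h2 : p = W.inv p := h1.trans (idem_self_inv W (W.inv p) hxx)
  rw [h2]; exact hxx

theorem idem_comm (g h : S) (hg : W.mul g g = g) (hh : W.mul h h = h) :
    W.mul g h = W.mul h g := by
  have hgh := idem_mul_idem W g h hg hh
  have hhg := idem_mul_idem W h g hh hg
  have h1 : W.mul h g = W.inv (W.mul g h) := by
    refine W.inv_unique (W.mul g h) (W.mul h g) ?_ ?_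
    · have e : W.mul (W.mul (W.mul g h) (W.mul h g)) (W.mul g h)
          = W.mul (W.mul g h) (W.mul g h) := by
        simp only [W.mul_assoc]
        rw [← W.mul_assoc h h, hh, ← W.mul_assoc g g, hg]
      rw [e, hgh]
    · have e : W.mul (W.mul (W.mul h g) (W.mul g h)) (W.mul h g)
          = W.mul (W.mul h g) (W.mul h g) := by
        simp only [W.mul_assoc]
        rw [← W.mul_assoc g g, hg, ← W.mul_assoc h h, hh]
      rw [e, hhg]
  rw [h1, idem_self_inv W _ hgh]

theorem inv_mul_rev (a b : S) :
    W.inv (W.mul a b) = W.mul (W.inv b) (W.inv a) := by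
  have hcm := idem_comm W (W.mul b (W.inv b)) (W.mul (W.inv a) a)
    (mulinv_idem W b) (invmul_idem W a)
  refine (W.inv_unique (W.mul a b) (W.mul (W.inv b) (W.inv a)) ?_ ?_).symm
  · have e1 : W.mul (W.mul (W.mul a b) (W.mul (W.inv b) (W.inv a))) (W.mul a b)
        = W.mul a (W.mul (W.mul (W.mul b (W.inv b)) (W.mul (W.inv a) a)) b) := by
      simp only [W.mul_assoc]
    rw [e1, hcm]
    have e2 : W.mul a (W.mul (W.mul (W.mul (W.inv a) a) (W.mul b (W.inv b))) b)
        = W.mul (W.mul (W.mul a (W.inv a)) a) (W.mul (W.mul b (W.inv b)) b) := by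
      simp only [W.mul_assoc]
    rw [e2, W.mul_inv_mul, W.mul_inv_mul]
  · have e1 : W.mul (W.mul (W.mul (W.inv b) (W.inv a)) (W.mul a b)) (W.mul (W.inv b) (W.inv a))
        = W.mul (W.inv b) (W.mul (W.mul (W.mul (W.inv a) a) (W.mul b (W.inv b))) (W.inv a)) := by
      simp only [W.mul_assoc]
    rw [e1, ← hcm]
    have e2 : W.mul (W.inv b) (W.mul (W.mul (W.mul b (W.inv b)) (W.mul (W.inv a) a)) (W.inv a))
        = W.mul (W.mul (W.mul (W.inv b) b) (W.inv b)) (W.mul (W.mul (W.inv a) a) (W.inv a)) := by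
      simp only [W.mul_assoc]
    rw [e2, W.inv_mul_inv, W.inv_mul_inv]

theorem neg_add (hc : ∀ a b : S, W.add a b = W.add b a) (a b : S) :
    W.neg (W.add a b) = W.add (W.neg a) (W.neg b) := by
  letI : Std.Associative W.add := ⟨W.add_assoc⟩
  letI : Std.Commutative W.add := ⟨hc⟩
  refine (W.neg_unique (W.add a b) (W.add (W.neg a) (W.neg b)) ?_ ?_).symm
  · have e1 : W.add (W.add (W.add a b) (W.add (W.neg a) (W.neg b))) (W.add a b)
        = W.add (W.add (W.add a (W.neg a)) a) (W.add (W.add b (W.neg b)) b) := by ac_rfl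
    rw [e1, W.add_neg_add, W.add_neg_add]
  · have e1 : W.add (W.add (W.add (W.neg a) (W.neg b)) (W.add a b)) (W.add (W.neg a) (W.neg b))
        = W.add (W.add (W.add (W.neg a) a) (W.neg a)) (W.add (W.add (W.neg b) b) (W.neg b)) := by
      ac_rfl
    rw [e1, W.neg_add_neg, W.neg_add_neg]

theorem addIdem_of_mulIdem (k : S) (h : W.mul k k = k) : W.add k k = k := by
  have h1 : W.inv k = k := idem_self_inv W k h
  have h3 : W.add (W.neg k) k = k := by rw [← W.mul_inv_eq, h1, h]
  have e : W.add k k = W.add (W.add k (W.neg k)) k := by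
    rw [W.add_assoc, h3]
  rw [e, W.add_neg_add]

theorem mulIdem_of_addIdem (k : S) (h : W.add k k = k) : W.mul k k = k := by
  have hn : W.neg k = k := idem_self_neg W k h
  have h2 : W.mul k (W.inv k) = k := by rw [W.mul_inv_eq, hn, h]
  have h3 := W.mul_inv_mul k
  rwa [h2] at h3

theorem idem_mul_eq_add (hc : ∀ a b : S, W.add a b = W.add b a) (g h : S)
    (hg : W.mul g g = g) (hh : W.mul h h = h) :
    W.mul g h = W.add g h := by
  letI : Std.Associative W.add := ⟨W.add_assoc⟩
  letI : Std.Commutative W.add := ⟨hc⟩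
  have hga : W.add g g = g := addIdem_of_mulIdem W g hg
  have hha : W.add h h = h := addIdem_of_mulIdem W h hh
  have hghm := idem_mul_idem W g h hg hh
  have hgha : W.add (W.mul g h) (W.mul g h) = W.mul g h := addIdem_of_mulIdem W _ hghm
  have hka : W.add (W.add g h) (W.add g h) = W.add g h := by
    have e : W.add (W.add g h) (W.add g h) = W.add (W.add g g) (W.add h h) := by ac_rfl
    rw [e, hga, hha]
  have hkm : W.mul (W.add g h) (W.add g h) = W.add g h := mulIdem_of_addIdem W _ hka
  have hng : W.neg g = g := idem_self_neg W g hga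
  have hnh : W.neg h = h := idem_self_neg W h hha
  have hnk : W.neg (W.add g h) = W.add g h := idem_self_neg W _ hka
  have hcm : W.mul g h = W.mul h g := idem_comm W g h hg hh
  -- (i): g∘h = g∘h + g
  have hi : W.mul g h = W.add (W.mul g h) g := by
    have d := W.distrib g h h
    rw [hha, hng] at d
    have e1 : W.add (W.add (W.mul g h) g) (W.mul g h)
        = W.add (W.add (W.mul g h) (W.mul g h)) g := by ac_rfl
    rw [e1, hgha] at d
    exact d
  -- (ii): g∘h = g∘h + h
  have hii : W.mul g h = W.add (W.mul g h) h := by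
    have d := W.distrib h g g
    rw [hga, hnh] at d
    have e1 : W.add (W.add (W.mul h g) h) (W.mul h g)
        = W.add (W.add (W.mul h g) (W.mul h g)) h := by ac_rfl
    rw [e1, ← hcm, hgha] at d
    exact d
  -- (iii): g∘h = g∘h + (g+h)
  have hiii : W.mul g h = W.add (W.mul g h) (W.add g h) := by
    conv_lhs => rw [hi, hii]
    ac_rfl
  -- (iv): g∘(g+h) = g + g∘h
  have hiv : W.mul g (W.add g h) = W.add g (W.mul g h) := by
    have d := W.distrib g g h
    rw [hg, hng, hga] at d
    exact d
  -- (v): h∘(g+h) = g∘h + h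
  have hv : W.mul h (W.add g h) = W.add (W.mul g h) h := by
    have d := W.distrib h g h
    rw [hh, hnh, ← hcm] at d
    have e1 : W.add (W.add (W.mul g h) h) h = W.add (W.mul g h) (W.add h h) := by ac_rfl
    rw [e1, hha] at d
    exact d
  -- (vi): g+h = (g+h) + g∘h
  have hvi : W.add g h = W.add (W.add g h) (W.mul g h) := by
    have d := W.distrib (W.add g h) g h
    rw [hnk] at d
    have dk : W.mul (W.add g h) g = W.add g (W.mul g h) := by
      rw [idem_comm W (W.add g h) g hkm hg]; exact hiv
    have dh : W.mul (W.add g h) h = W.add (W.mul g h) h := by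
      rw [idem_comm W (W.add g h) h hkm hh]; exact hv
    rw [dk, dh, hkm] at d
    have e1 : W.add (W.add (W.add g (W.mul g h)) (W.add g h)) (W.add (W.mul g h) h)
        = W.add (W.add (W.add g g) (W.add h h)) (W.add (W.mul g h) (W.mul g h)) := by ac_rfl
    rw [e1, hga, hha, hgha] at d
    exact d
  calc W.mul g h = W.add (W.mul g h) (W.add g h) := hiii
    _ = W.add (W.add g h) (W.mul g h) := hc _ _
    _ = W.add g h := hvi.symm

theorem lam_eq (a b : S) :
    W.mul a (W.add (W.inv a) b) = W.add (W.neg a) (W.mul a b) := by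
  rw [W.distrib, W.mul_inv_eq, W.neg_add_neg]

theorem cc_eq (hc : ∀ a b : S, W.add a b = W.add b a) (a b : S) :
    W.mul (W.add (W.inv a) b) (W.inv (W.add (W.inv a) b))
      = W.mul (W.mul (W.inv a) a) (W.mul b (W.inv b)) := by
  letI : Std.Associative W.add := ⟨W.add_assoc⟩
  letI : Std.Commutative W.add := ⟨hc⟩
  rw [W.mul_inv_eq, neg_add W hc]
  have e1 : W.add (W.add (W.neg (W.inv a)) (W.neg b)) (W.add (W.inv a) b)
      = W.add (W.add (W.neg (W.inv a)) (W.inv a)) (W.add (W.neg b) b) := by ac_rfl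
  rw [e1, ← W.mul_inv_eq, ← W.mul_inv_eq, inv_inv]
  exact (idem_mul_eq_add W hc _ _ (invmul_idem W a) (mulinv_idem W b)).symm

theorem rho_eq (hc : ∀ a b : S, W.add a b = W.add b a) (a b : S) :
    W.mul (W.inv (W.add (W.inv a) b)) b
      = W.mul (W.inv (W.mul a (W.add (W.inv a) b))) (W.mul a b) := by
  set c := W.add (W.inv a) b with hcdef
  have hf := invmul_idem W a
  have hcc := cc_eq W hc a b
  rw [inv_mul_rev]
  have e1 : W.mul (W.mul (W.inv c) (W.inv a)) (W.mul a b)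
      = W.mul (W.inv c) (W.mul (W.mul (W.inv a) a) b) := by
    simp only [W.mul_assoc]
  rw [e1]
  have e2 : W.mul (W.inv c) (W.mul (W.mul (W.inv a) a) b)
      = W.mul (W.inv c) (W.mul (W.mul (W.mul c (W.inv c)) (W.mul (W.inv a) a)) b) := by
    conv_lhs => rw [← W.inv_mul_inv c]
    simp only [W.mul_assoc]
  rw [e2]
  have e3 : W.mul (W.mul c (W.inv c)) (W.mul (W.inv a) a) = W.mul c (W.inv c) := by
    rw [hcc, W.mul_assoc,
      ← idem_comm W (W.mul (W.inv a) a) (W.mul b (W.inv b)) hf (mulinv_idem W b),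
      ← W.mul_assoc, hf]
  rw [e3]
  have e4 : W.mul (W.inv c) (W.mul (W.mul c (W.inv c)) b) = W.mul (W.inv c) b := by
    conv_rhs => rw [← W.inv_mul_inv c]
    simp only [W.mul_assoc]
  rw [e4]

theorem lam_mul_rho (hc : ∀ a b : S, W.add a b = W.add b a) (a b : S) :
    W.mul (W.mul a (W.add (W.inv a) b)) (W.mul (W.inv (W.add (W.inv a) b)) b)
      = W.mul a b := by
  set c := W.add (W.inv a) b with hcdef
  have hcc := cc_eq W hc a b
  have e1 : W.mul (W.mul a c) (W.mul (W.inv c) b)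
      = W.mul a (W.mul (W.mul c (W.inv c)) b) := by
    simp only [W.mul_assoc]
  rw [e1, hcc]
  have e2 : W.mul a (W.mul (W.mul (W.mul (W.inv a) a) (W.mul b (W.inv b))) b)
      = W.mul (W.mul (W.mul a (W.inv a)) a) (W.mul (W.mul b (W.inv b)) b) := by
    simp only [W.mul_assoc]
  rw [e2, W.mul_inv_mul, W.mul_inv_mul]

theorem key_absorb (hc : ∀ a b : S, W.add a b = W.add b a) (a b : S) :
    W.mul (W.add (W.neg a) (W.mul a b))
        (W.mul (W.inv (W.add (W.neg a) (W.mul a b))) (W.mul a b))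
      = W.mul a b := by
  have h := lam_mul_rho W hc a b
  rw [rho_eq W hc a b] at h
  rwa [lam_eq W a b] at h

end WBAux

theorem weakBrace_comm_add_r_cubic {S : Type*} (W : WeakBrace S)
    (add_comm : ∀ a b : S, W.add a b = W.add b a) :
    let r : S × S → S × S := fun p =>
      (W.mul p.1 (W.add (W.inv p.1) p.2), W.mul (W.inv (W.add (W.inv p.1) p.2)) p.2)
    r ∘ r ∘ r = r := by
  intro r
  letI : Std.Associative W.add := ⟨W.add_assoc⟩
  letI : Std.Commutative W.add := ⟨add_comm⟩
  have r_apply : ∀ a b : S, r (a, b) =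
      (W.add (W.neg a) (W.mul a b),
       W.mul (W.inv (W.add (W.neg a) (W.mul a b))) (W.mul a b)) := by
    intro a b
    show (W.mul a (W.add (W.inv a) b), W.mul (W.inv (W.add (W.inv a) b)) b) = _
    rw [WBAux.rho_eq W add_comm a b, WBAux.lam_eq W a b]
  funext p
  obtain ⟨a, b⟩ := p
  simp only [Function.comp_apply]
  set s := W.mul a b with hs
  set u₁ := W.add (W.neg a) s with hu₁
  have h1 : r (a, b) = (u₁, W.mul (W.inv u₁) s) := r_apply a b
  have k1 : W.mul u₁ (W.mul (W.inv u₁) s) = s := WBAux.key_absorb W add_comm a b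
  set u₂ := W.add (W.neg u₁) s with hu₂
  have h2 : r (u₁, W.mul (W.inv u₁) s) = (u₂, W.mul (W.inv u₂) s) := by
    rw [r_apply u₁ (W.mul (W.inv u₁) s), k1]
  have k2 : W.mul u₂ (W.mul (W.inv u₂) s) = s := by
    have h := WBAux.key_absorb W add_comm u₁ (W.mul (W.inv u₁) s)
    rwa [k1] at h
  set u₃ := W.add (W.neg u₂) s with hu₃
  have h3 : r (u₂, W.mul (W.inv u₂) s) = (u₃, W.mul (W.inv u₃) s) := by
    rw [r_apply u₂ (W.mul (W.inv u₂) s), k2]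
  have hu : u₃ = u₁ := by
    rw [hu₃, hu₂, WBAux.neg_add W add_comm, WBAux.neg_neg, hu₁]
    have e1 : W.add (W.add (W.add (W.neg a) s) (W.neg s)) s
        = W.add (W.neg a) (W.add (W.add s (W.neg s)) s) := by ac_rfl
    rw [e1, W.add_neg_add]
  rw [h1, h2, h3, hu]
end

section
/- Let S be a weak brace whose additive semigroup (S,+) is idempotent (every element satisfies a + a = a), and r the solution r(a,b) = (a∘(a⁻+b), (a⁻+b)⁻∘b). Then r³ = r². -/
/-- An idempotent "inverse semigroup" (with an inverse-uniqueness axiom) is commutative. -/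
private lemma wb_comm_of_idem {S : Type*} (op : S → S → S) (iv : S → S)
    (assoc : ∀ a b c : S, op (op a b) c = op a (op b c))
    (huniq : ∀ a x : S, op (op a x) a = a → op (op x a) x = x → x = iv a)
    (idem : ∀ a : S, op a a = a) : ∀ a b : S, op a b = op b a := by
  have dup : ∀ a x : S, op a (op a x) = op a x := by
    intro a x; rw [← assoc, idem]
  have key : ∀ a b : S, op (op (op a b) (op b a)) (op a b) = op a b := by
    intro a b
    simp only [assoc]
    rw [dup b, dup a, ← assoc a b (op a b), idem]
  intro a b
  have h1 := huniq (op a b) (op b a) (key a b) (key b a)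
  have h2 := huniq (op a b) (op a b) (by rw [idem, idem]) (by rw [idem, idem])
  exact h2.trans h1.symm

section Aux

variable {S : Type*} (W : WeakBrace S) (add_idem : ∀ a : S, W.add a a = a)

include add_idem

private lemma wb_neg_eq : ∀ a : S, W.neg a = a := by
  intro a
  exact (W.neg_unique a a (by rw [add_idem, add_idem]) (by rw [add_idem, add_idem])).symm

private lemma wb_mul_idem : ∀ a : S, W.mul a a = a := by
  intro a
  have h : W.mul a (W.inv a) = a := by
    rw [W.mul_inv_eq, wb_neg_eq W add_idem, add_idem]
  have h2 := W.mul_inv_mul a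
  rwa [h] at h2

private lemma wb_inv_eq : ∀ a : S, W.inv a = a := by
  intro a
  have hi := wb_mul_idem W add_idem
  exact (W.inv_unique a a (by rw [hi, hi]) (by rw [hi, hi])).symm

private lemma wb_add_comm : ∀ a b : S, W.add a b = W.add b a :=
  wb_comm_of_idem W.add W.neg W.add_assoc W.neg_unique add_idem

private lemma wb_mul_comm : ∀ a b : S, W.mul a b = W.mul b a :=
  wb_comm_of_idem W.mul W.inv W.mul_assoc W.inv_unique (wb_mul_idem W add_idem)

private lemma wb_distrib' : ∀ a b c : S,
    W.mul a (W.add b c) = W.add (W.add (W.mul a b) a) (W.mul a c) := by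
  intro a b c
  rw [W.distrib, wb_neg_eq W add_idem]

/-- `a∘(a+b) = a + a∘b`. -/
private lemma wb_lam : ∀ a b : S, W.mul a (W.add a b) = W.add a (W.mul a b) := by
  intro a b
  rw [wb_distrib' W add_idem, wb_mul_idem W add_idem, add_idem]

/-- `(a+b)∘b = a∘b + b`. -/
private lemma wb_rho : ∀ a b : S, W.mul (W.add a b) b = W.add (W.mul a b) b := by
  intro a b
  rw [wb_mul_comm W add_idem, wb_distrib' W add_idem, wb_mul_idem W add_idem,
    W.add_assoc, add_idem, wb_mul_comm W add_idem b a]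

/-- `p + b + p = p + b` where `p = a∘b` (general absorption of a repeated summand). -/
private lemma wb_xyx : ∀ x y : S, W.add (W.add x y) x = W.add x y := by
  intro x y
  rw [W.add_assoc, wb_add_comm W add_idem y x, ← W.add_assoc, add_idem]

/-- Key step: `a∘b + b = a∘b + a` for all `a, b`. -/
private lemma wb_star : ∀ a b : S, W.add (W.mul a b) b = W.add (W.mul a b) a := by
  intro a b
  have hmc := wb_mul_comm W add_idem
  have hmi := wb_mul_idem W add_idem
  -- b∘(a∘b) = a∘b and a∘(a∘b) = a∘b
  have hbp : W.mul b (W.mul a b) = W.mul a b := by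
    rw [hmc b (W.mul a b), W.mul_assoc, hmi]
  have hap : W.mul a (W.mul a b) = W.mul a b := by
    rw [← W.mul_assoc, hmi]
  -- LHS of associativity: (a∘(a+b))∘b = a∘b + b
  have hL : W.mul (W.mul a (W.add a b)) b = W.add (W.mul a b) b := by
    rw [wb_lam W add_idem, hmc _ b, wb_distrib' W add_idem, hbp,
      hmc b a, wb_xyx W add_idem]
  -- RHS of associativity: a∘((a+b)∘b) = a∘b + a
  have hR : W.mul a (W.mul (W.add a b) b) = W.add (W.mul a b) a := by
    rw [wb_rho W add_idem, wb_distrib' W add_idem, hap, wb_xyx W add_idem]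
  rw [← hL, W.mul_assoc, hR]

/-- `a∘b + b = a∘b`. -/
private lemma wb_absorb_right : ∀ a b : S, W.add (W.mul a b) b = W.mul a b := by
  intro a b
  have h := wb_star W add_idem (W.mul a b) b
  rw [W.mul_assoc, wb_mul_idem W add_idem] at h
  rw [h, add_idem]

/-- `a∘b + a = a∘b`. -/
private lemma wb_absorb_left : ∀ a b : S, W.add (W.mul a b) a = W.mul a b := by
  intro a b
  rw [← wb_star W add_idem, wb_absorb_right W add_idem]

end Aux

theorem weakBrace_idem_add_r_cubed_eq_squared {S : Type*} (W : WeakBrace S)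
    (add_idem : ∀ a : S, W.add a a = a) :
    let r : S × S → S × S := fun p =>
      (W.mul p.1 (W.add (W.inv p.1) p.2), W.mul (W.inv (W.add (W.inv p.1) p.2)) p.2)
    r ∘ r ∘ r = r ∘ r := by
  intro r
  have hinv := wb_inv_eq W add_idem
  have hr : ∀ a b : S, r (a, b) = (W.mul a b, W.mul a b) := by
    intro a b
    show (W.mul a (W.add (W.inv a) b), W.mul (W.inv (W.add (W.inv a) b)) b) = _
    rw [hinv, hinv, wb_lam W add_idem, wb_add_comm W add_idem a (W.mul a b),
      wb_absorb_left W add_idem, wb_rho W add_idem, wb_absorb_right W add_idem]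
  have hrr : r ∘ r = r := by
    funext q
    obtain ⟨a, b⟩ := q
    rw [Function.comp_apply, hr a b, hr (W.mul a b) (W.mul a b), wb_mul_idem W add_idem]
  show r ∘ (r ∘ r) = r ∘ r
  conv_lhs => rw [hrr]
end

section
/- Let (S,+) be a Clifford semigroup with an exact factorization S = U + V into two Clifford subsemigroups (every a ∈ S is uniquely a = u_a + v_a with u_a ∈ U, v_a ∈ V). Define a∘b := u_a + b + v_a. Then (S,+,∘) is a weak brace, and the inverse of a with respect to ∘ is -u_a - v_a. -/
theorem clifford_exact_factorization_weakBrace {S : Type*}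
    (add : S → S → S) (neg : S → S)
    (add_assoc : ∀ a b c : S, add (add a b) c = add a (add b c))
    (add_neg_add : ∀ a : S, add (add a (neg a)) a = a)
    (neg_add_neg : ∀ a : S, add (add (neg a) a) (neg a) = neg a)
    (neg_unique : ∀ a x : S, add (add a x) a = a → add (add x a) x = x → x = neg a)
    (idem_central : ∀ e a : S, add e e = e → add e a = add a e)
    (U V : Set S)
    (hUadd : ∀ a b, a ∈ U → b ∈ U → add a b ∈ U) (hUneg : ∀ a, a ∈ U → neg a ∈ U)
    (hVadd : ∀ a b, a ∈ V → b ∈ V → add a b ∈ V) (hVneg : ∀ a, a ∈ V → neg a ∈ V)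
    (u v : S → S) (hu : ∀ a, u a ∈ U) (hv : ∀ a, v a ∈ V)
    (hfact : ∀ a : S, a = add (u a) (v a))
    (hexact : ∀ a x y : S, x ∈ U → y ∈ V → a = add x y → x = u a ∧ y = v a) :
    ∃ W : WeakBrace S, W.add = add ∧ W.neg = neg ∧
      (∀ a b : S, W.mul a b = add (add (u a) b) (v a)) ∧
      (∀ a : S, W.inv a = add (neg (u a)) (neg (v a))) := by
  have Aassoc : ∀ a b c : S, add (add a b) c = add a (add b c) := add_assoc
  have swapc : ∀ e a b : S, add e e = e → add a (add e b) = add e (add a b) := by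
    intro e a b he
    rw [← Aassoc, ← idem_central e a he, Aassoc]
  have idem_an : ∀ a : S, add (add a (neg a)) (add a (neg a)) = add a (neg a) := by
    intro a; rw [← Aassoc, add_neg_add]
  have idem_na : ∀ a : S, add (add (neg a) a) (add (neg a) a) = add (neg a) a := by
    intro a; rw [← Aassoc, neg_add_neg]
  have A1 : ∀ a : S, add a (add (neg a) a) = a := by
    intro a; rw [← Aassoc, add_neg_add]
  have A2 : ∀ a : S, add (neg a) (add a (neg a)) = neg a := by
    intro a; rw [← Aassoc, neg_add_neg]
  have cancel : ∀ a b : S, add a (add (neg a) (add a b)) = add a b := by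
    intro a b; rw [← Aassoc, ← Aassoc, add_neg_add]
  have cancel' : ∀ a b : S, add (neg a) (add a (add (neg a) b)) = add (neg a) b := by
    intro a b; rw [← Aassoc, ← Aassoc, neg_add_neg]
  have absorb : ∀ a b : S, add a (add (add (neg a) a) b) = add a b := by
    intro a b; rw [Aassoc (neg a) a b, cancel]
  have comm_na : ∀ a : S, add a (neg a) = add (neg a) a := by
    intro a
    have h1 : add (add a (neg a)) (neg a) = neg a := by
      rw [idem_central _ _ (idem_an a), A2]
    have h2 : add (add (neg a) a) a = a := by
      rw [idem_central _ _ (idem_na a), A1]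
    calc add a (neg a) = add (add (add (neg a) a) a) (neg a) := by rw [h2]
      _ = add (add a (neg a)) (add (neg a) a) := by
            rw [Aassoc]; exact idem_central _ _ (idem_na a)
      _ = add (neg a) a := by rw [← Aassoc, h1]
  have neg_add : ∀ a b : S, neg (add a b) = add (neg b) (neg a) := by
    intro a b
    have pull : ∀ x y : S, add y (add (neg y) (add (neg x) (add x y))) = add (neg x) (add x y) := by
      intro x y
      rw [← Aassoc (neg x) x y, swapc _ _ _ (idem_na x), swapc _ _ _ (idem_na x), A1]
    have c1 : add (add (add a b) (add (neg b) (neg a))) (add a b) = add a b := by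
      simp only [Aassoc]
      rw [pull, cancel]
    have c2 : add (add (add (neg b) (neg a)) (add a b)) (add (neg b) (neg a)) = add (neg b) (neg a) := by
      simp only [Aassoc]
      rw [← Aassoc b (neg b) (neg a), swapc _ _ _ (idem_an b), swapc _ _ _ (idem_an b), A2, ← Aassoc, ← Aassoc, neg_add_neg]
    exact (neg_unique _ _ c1 c2).symm
  have KUV : ∀ a b : S, add (add (u a) b) (v a) = add (add (u a) (u b)) (add (v b) (v a)) := by
    intro a b
    conv_lhs => rw [hfact b]
    simp only [Aassoc]
  have KU : ∀ a b : S, add (u a) (u b) = u (add (add (u a) b) (v a)) :=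
    fun a b => (hexact _ _ _ (hUadd _ _ (hu a) (hu b)) (hVadd _ _ (hv b) (hv a)) (KUV a b)).1
  have KV : ∀ a b : S, add (v b) (v a) = v (add (add (u a) b) (v a)) :=
    fun a b => (hexact _ _ _ (hUadd _ _ (hu a) (hu b)) (hVadd _ _ (hv b) (hv a)) (KUV a b)).2
  have KIU : ∀ a : S, neg (u a) = u (add (neg (u a)) (neg (v a))) :=
    fun a => (hexact _ _ _ (hUneg _ (hu a)) (hVneg _ (hv a)) rfl).1
  have KIV : ∀ a : S, neg (v a) = v (add (neg (u a)) (neg (v a))) :=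
    fun a => (hexact _ _ _ (hUneg _ (hu a)) (hVneg _ (hv a)) rfl).2
  refine ⟨⟨add, fun a b => add (add (u a) b) (v a), neg, fun a => add (neg (u a)) (neg (v a)),
    add_assoc, ?_, add_neg_add, neg_add_neg, neg_unique, ?_, ?_, ?_, ?_, ?_⟩,
    rfl, rfl, fun a b => rfl, fun a => rfl⟩
  · -- mul_assoc
    intro a b c
    show add (add (u (add (add (u a) b) (v a))) c) (v (add (add (u a) b) (v a))) = add (add (u a) (add (add (u b) c) (v b))) (v a)
    rw [← KU, ← KV]
    simp only [Aassoc]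
  · -- mul_inv_mul
    intro a
    show add (add (u (add (add (u a) (add (neg (u a)) (neg (v a)))) (v a))) a) (v (add (add (u a) (add (neg (u a)) (neg (v a)))) (v a))) = a
    rw [← KU, ← KV, ← KIU, ← KIV]
    have key : ∀ p q x : S, x = add p q → add (add (add p (neg p)) x) (add (neg q) q) = x := by
      intro p q x hx
      rw [hx]
      simp only [Aassoc]
      rw [A1, cancel]
    exact key _ _ _ (hfact a)
  · -- inv_mul_inv
    intro a
    show add (add (u (add (add (u (add (neg (u a)) (neg (v a)))) a) (v (add (neg (u a)) (neg (v a)))))) (add (neg (u a)) (neg (v a)))) (v (add (add (u (add (neg (u a)) (neg (v a)))) a) (v (add (neg (u a)) (neg (v a)))))) = add (neg (u a)) (neg (v a))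
    rw [← KU, ← KV, ← KIU, ← KIV]
    simp only [Aassoc]
    rw [A2, cancel']
  · -- inv_unique
    intro a x h1 h2
    have hu1 : add (add (u a) (u x)) (u a) = u a := by
      have := congrArg u h1
      rwa [← KU, ← KU] at this
    have hv1 : add (add (v x) (v a)) (v x) = v x := by
      have := congrArg v h2
      rwa [← KV, ← KV, ← Aassoc] at this
    have hu2 : add (add (u x) (u a)) (u x) = u x := by
      have := congrArg u h2
      rwa [← KU, ← KU] at this
    have hv2 : add (add (v a) (v x)) (v a) = v a := by
      have := congrArg v h1
      rwa [← KV, ← KV, ← Aassoc] at this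
    show x = add (neg (u a)) (neg (v a))
    rw [← neg_unique (u a) (u x) hu1 hu2, ← neg_unique (v a) (v x) hv2 hv1]
    exact hfact x
  · -- distrib
    intro a b c
    show add (add (u a) (add b c)) (v a) = add (add (add (add (u a) b) (v a)) (neg a)) (add (add (u a) c) (v a))
    have hna : neg a = add (neg (v a)) (neg (u a)) := by
      conv_lhs => rw [hfact a]
      exact neg_add _ _
    rw [hna]
    simp only [Aassoc]
    rw [← Aassoc (v a) (neg (v a)), ← Aassoc (neg (u a)) (u a), swapc _ _ _ (idem_na (u a)),
      ← swapc _ _ _ (idem_an (v a)), add_neg_add, swapc _ _ _ (idem_na (u a)), absorb]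
  · -- mul_inv_eq
    intro a
    show add (add (u a) (add (neg (u a)) (neg (v a)))) (v a) = add (neg a) a
    have key2 : ∀ p q x : S, x = add p q → add (add p (add (neg p) (neg q))) q = add (neg x) x := by
      intro p q x hx
      rw [hx, neg_add]
      simp only [Aassoc]
      rw [← Aassoc (neg p) p q, swapc _ _ _ (idem_na p), ← Aassoc, comm_na]
    exact key2 _ _ _ (hfact a)
end
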